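/- Let Δ be the countable set of finitely supported 0-1 sequences indexed by the positive integers, with componentwise addition modulo 2, and let H = ℓ²(Δ; ℂ). For each k ≥ 1 define operators on H by (J_k f)(x) = (−1)^{x_1+⋯+x_{k−1}+1} · i · f(x+δ_k) and (J'_k f)(x) = (−1)^{x_k} · i · (J_k f)(x), where δ_k is the sequence with 1 in the k-th place and 0 elsewhere. Then the representation is irreducible over ℝ: the only closed real-linear subspaces of ℓ²(Δ; ℂ) invariant under J_k and J'_k for all k ≥ 1 are {0} and ℓ²(Δ; ℂ). -/

import Mathlib

/-!
`GWDelta` is the group `Δ` of finitely supported 0-1 sequences indexed by the positive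
integers, with componentwise addition mod 2; the Lean coordinate `i : ℕ` represents the
paper's coordinate `i + 1` (so the Lean index `k` corresponds to the paper's index `k + 1`).
`FockH = ℓ²(Δ; ℂ)`, and `Finsupp.single k 1` is the element `δ_k`.
-/

open MeasureTheory Complex
open scoped ENNReal

noncomputable section

abbrev GWDelta : Type := ℕ →₀ ZMod 2

abbrev FockH : Type := lp (fun _ : GWDelta => ℂ) 2

namespace FermiFockAux

lemma gw_add_self (y : GWDelta) : y + y = 0 := by
  ext i; simp [CharTwo.add_self_eq_zero]

lemma gw_add_single_single (x : GWDelta) (k : ℕ) :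
    x + Finsupp.single k 1 + Finsupp.single k 1 = x := by
  rw [add_assoc, ← Finsupp.single_add]
  have : (1 + 1 : ZMod 2) = 0 := by decide
  rw [this, Finsupp.single_zero, add_zero]

lemma gw_sum_add_single (x : GWDelta) (k : ℕ) :
    ∑ i ∈ Finset.range k, (((x + Finsupp.single k 1 : GWDelta)) i).val
      = ∑ i ∈ Finset.range k, (x i).val := by
  refine Finset.sum_congr rfl fun i hi => ?_
  have : i ≠ k := by simp at hi; omega
  simp [Finsupp.add_apply, Finsupp.single_apply, this.symm]

/-- escape lemma: for `x ≠ y` the condition `∀ i ≤ n, x i + y i = x 0 + y 0`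
eventually fails. -/
lemma escape (x y : GWDelta) (hxy : x ≠ y) :
    ∃ N, ∀ n ≥ N, ¬ (∀ i ≤ n, x i + y i = x 0 + y 0) := by
  set d : GWDelta := x + y with hd
  have hd0 : d ≠ 0 := by
    intro h
    apply hxy
    have hyy : y + y = (0 : GWDelta) := gw_add_self y
    have h2 : x + y + y = (0 : GWDelta) + y := by rw [← hd, h]
    rw [add_assoc, hyy, add_zero, zero_add] at h2
    exact h2
  obtain ⟨m, hm⟩ : ∃ m, d m ≠ 0 := by
    by_contra h
    push_neg at h
    exact hd0 (Finsupp.ext h)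
  refine ⟨max m (d.support.sup id + 1), fun n hn hc => ?_⟩
  have h1 : x m + y m = x 0 + y 0 := hc m (le_trans (le_max_left _ _) hn)
  have h2 : x n + y n = x 0 + y 0 := hc n le_rfl
  have hdn : d n = 0 := by
    by_contra h
    have hmem : n ∈ d.support := Finsupp.mem_support_iff.2 h
    have := Finset.le_sup (f := id) hmem
    simp only [id] at this
    omega
  have e1 : d m = x 0 + y 0 := by rw [hd]; simpa [Finsupp.add_apply] using h1
  have e2 : d n = x 0 + y 0 := by rw [hd]; simpa [Finsupp.add_apply] using h2
  rw [hdn] at e2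
  rw [← e2] at e1
  exact hm e1

lemma zmod2_cases (a : ZMod 2) : a = 0 ∨ a = 1 := by revert a; decide

lemma sgn4_eq {p q r s : ZMod 2} (h : p + q = r + s) :
    ((-1 : ℂ)) ^ (p.val + q.val) * (-1 : ℂ) ^ (r.val + s.val) = 1 := by
  rcases zmod2_cases p with hp | hp <;> rcases zmod2_cases q with hq | hq <;>
    rcases zmod2_cases r with hr | hr <;> rcases zmod2_cases s with hs | hs <;>
      subst hp hq hr hs <;> first
        | exact absurd h (by decide)
        | norm_num [ZMod.val_zero, ZMod.val_one]

lemma sgn4_ne {p q r s : ZMod 2} (h : p + q ≠ r + s) :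
    ((-1 : ℂ)) ^ (p.val + q.val) * (-1 : ℂ) ^ (r.val + s.val) = -1 := by
  rcases zmod2_cases p with hp | hp <;> rcases zmod2_cases q with hq | hq <;>
    rcases zmod2_cases r with hr | hr <;> rcases zmod2_cases s with hs | hs <;>
      subst hp hq hr hs <;> first
        | exact absurd (by decide) h
        | norm_num [ZMod.val_zero, ZMod.val_one]

lemma negT2 (a b : ℕ) (v : ℂ) :
    -((-1 : ℂ) ^ (a + 1) * Complex.I * ((-1 : ℂ) ^ (b + 1) * Complex.I * v))
      = (-1 : ℂ) ^ a * ((-1 : ℂ) ^ b * v) := by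
  rw [pow_succ, pow_succ]
  linear_combination (-((-1 : ℂ) ^ a * (-1 : ℂ) ^ b * v)) * Complex.I_sq

lemma zmod2_trans {a b c d e : ZMod 2} (h1 : a + b = e) (h2 : c + d = e) :
    a + c = b + d := by revert a b c d e; decide

lemma zmod2_trans' {a b c d e : ZMod 2} (h1 : a + b = e) (h2 : a + c = b + d) :
    c + d = e := by revert a b c d e; decide

section ops

variable (J J' : ℕ → FockH → FockH)
variable (hJ : ∀ (k : ℕ) (f : FockH) (x : GWDelta),
      (J k f : ∀ _ : GWDelta, ℂ) x =
        (-1 : ℂ) ^ ((∑ i ∈ Finset.range k, (x i).val) + 1) * Complex.I *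
          (f : ∀ _ : GWDelta, ℂ) (x + Finsupp.single k 1))
variable (hJ' : ∀ (k : ℕ) (f : FockH) (x : GWDelta),
      (J' k f : ∀ _ : GWDelta, ℂ) x =
        (-1 : ℂ) ^ (x k).val * Complex.I * (J k f : ∀ _ : GWDelta, ℂ) x)

include hJ hJ' in
/-- `T k := J' k ∘ J k` is multiplication by `(-1)^{x_k+1} i`. -/
lemma hT : ∀ (k : ℕ) (f : FockH) (x : GWDelta),
    (J' k (J k f) : ∀ _ : GWDelta, ℂ) x
      = (-1 : ℂ) ^ ((x k).val + 1) * Complex.I * (f : ∀ _ : GWDelta, ℂ) x := by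
  intro k f x
  rw [hJ' k (J k f) x, hJ k (J k f) x, hJ k f (x + Finsupp.single k 1),
    gw_sum_add_single, gw_add_single_single]
  set s := ∑ i ∈ Finset.range k, (x i).val
  set t := (x k).val
  have h2 : ((-1 : ℂ)) ^ (s + 1) * (-1 : ℂ) ^ (s + 1) = 1 := by
    rw [← pow_add]
    exact Even.neg_one_pow ⟨s + 1, by ring⟩
  rw [pow_succ]
  linear_combination ((-1 : ℂ) ^ t * Complex.I ^ 3 * (f : ∀ _ : GWDelta, ℂ) x) * h2 +
    ((-1 : ℂ) ^ t * (f : ∀ _ : GWDelta, ℂ) x * Complex.I) * Complex.I_sq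

include hJ hJ' in
/-- `J' k` is a signed translation: `(J' k f)(x) = (-1)^{x_k + Σ_{i<k} x_i} f(x+δ_k)`. -/
lemma hJ'form : ∀ (k : ℕ) (f : FockH) (x : GWDelta),
    (J' k f : ∀ _ : GWDelta, ℂ) x
      = (-1 : ℂ) ^ ((x k).val + ∑ i ∈ Finset.range k, (x i).val) *
          (f : ∀ _ : GWDelta, ℂ) (x + Finsupp.single k 1) := by
  intro k f x
  rw [hJ' k f x, hJ k f x]
  set s := ∑ i ∈ Finset.range k, (x i).val
  set t := (x k).val
  rw [pow_succ, pow_add]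
  linear_combination (-((-1 : ℂ) ^ t * (-1 : ℂ) ^ s *
    (f : ∀ _ : GWDelta, ℂ) (x + Finsupp.single k 1))) * Complex.I_sq

end ops

end FermiFockAux

open FermiFockAux

/-- the Fermi–Fock representation, given on `ℓ²(Δ; ℂ)` by
`(J_k f)(x) = (-1)^{x_1+⋯+x_{k-1}+1} i f(x + δ_k)` and `(J'_k f)(x) = (-1)^{x_k} i (J_k f)(x)`,
is irreducible over `ℝ`: it admits no nontrivial closed invariant real subspace. -/
theorem fermiFock_irreducible_real
    (J J' : ℕ → FockH → FockH)
    (hJ : ∀ (k : ℕ) (f : FockH) (x : GWDelta),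
      (J k f : ∀ _ : GWDelta, ℂ) x =
        (-1 : ℂ) ^ ((∑ i ∈ Finset.range k, (x i).val) + 1) * Complex.I *
          (f : ∀ _ : GWDelta, ℂ) (x + Finsupp.single k 1))
    (hJ' : ∀ (k : ℕ) (f : FockH) (x : GWDelta),
      (J' k f : ∀ _ : GWDelta, ℂ) x =
        (-1 : ℂ) ^ (x k).val * Complex.I * (J k f : ∀ _ : GWDelta, ℂ) x) :
    ∀ U : Submodule ℝ FockH, IsClosed (U : Set FockH) →
      (∀ k : ℕ, ∀ f ∈ U, J k f ∈ U ∧ J' k f ∈ U) →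
      U = ⊥ ∨ U = ⊤ := by
  intro U hUc hinv
  rcases eq_or_ne U ⊥ with hbot | hbot
  · exact Or.inl hbot
  right
  obtain ⟨f, hfU, hf0⟩ := (Submodule.ne_bot_iff U).1 hbot
  obtain ⟨y, hy⟩ : ∃ y, (f : ∀ _ : GWDelta, ℂ) y ≠ 0 := by
    by_contra h
    push_neg at h
    exact hf0 (lp.ext (funext h))
  have hTform := hT J J' hJ hJ'
  have hJ'f := hJ'form J J' hJ hJ'
  have hTU : ∀ (k : ℕ) (v : FockH), v ∈ U → J' k (J k v) ∈ U :=
    fun k v hv => (hinv k _ (hinv k v hv).1).2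
  -- the single at z
  set e : GWDelta → FockH := fun z => lp.single 2 z (1 : ℂ) with he
  have he_apply : ∀ z x : GWDelta, (e z : ∀ _ : GWDelta, ℂ) x = if x = z then 1 else 0 := by
    intro z x
    rcases eq_or_ne x z with rfl | hxz
    · simp [he, lp.single_apply_self]
    · simp [he, lp.single_apply_ne 2 z _ hxz, hxz]
  -- the averaging sequence
  set g : ℕ → FockH := fun n => Nat.rec f
    (fun n gn => (2⁻¹ : ℝ) • (gn + ((-1 : ℝ) ^ ((y n).val + (y (n + 1)).val)) •
      (-(J' n (J n (J' (n + 1) (J (n + 1) gn))))))) n with hg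
  have hgsucc : ∀ n, g (n + 1) = (2⁻¹ : ℝ) • (g n + ((-1 : ℝ) ^ ((y n).val + (y (n + 1)).val)) •
      (-(J' n (J n (J' (n + 1) (J (n + 1) (g n))))))) := fun n => rfl
  have hgU : ∀ n, g n ∈ U := by
    intro n
    induction n with
    | zero => exact hfU
    | succ n ih =>
        rw [hgsucc n]
        exact U.smul_mem _ (U.add_mem ih
          (U.smul_mem _ (U.neg_mem (hTU n _ (hTU (n + 1) _ ih)))))
  -- pointwise formula for g n
  have key : ∀ n (x : GWDelta),
      ((∀ i ≤ n, x i + y i = x 0 + y 0) → (g n : ∀ _ : GWDelta, ℂ) x = f x)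
        ∧ (¬ (∀ i ≤ n, x i + y i = x 0 + y 0) → (g n : ∀ _ : GWDelta, ℂ) x = 0) := by
    intro n
    induction n with
    | zero =>
        intro x
        refine ⟨fun _ => rfl, fun hcon => absurd (fun i hi => ?_) hcon⟩
        have : i = 0 := Nat.le_zero.mp hi
        subst this; rfl
    | succ n ih =>
        intro x
        have hcoe : (g (n + 1) : ∀ _ : GWDelta, ℂ) x
            = (2⁻¹ : ℂ) * ((g n : ∀ _ : GWDelta, ℂ) x +
                (-1 : ℂ) ^ ((y n).val + (y (n + 1)).val) *
                  ((-1 : ℂ) ^ (x n).val * ((-1 : ℂ) ^ (x (n + 1)).val *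
                    (g n : ∀ _ : GWDelta, ℂ) x))) := by
          rw [hgsucc n]
          rw [lp.coeFn_smul, Pi.smul_apply, lp.coeFn_add, Pi.add_apply,
            lp.coeFn_smul, Pi.smul_apply, lp.coeFn_neg, Pi.neg_apply]
          rw [hTform n _ x, hTform (n + 1) _ x]
          rw [negT2]
          push_cast [Complex.real_smul]
          ring
        constructor
        · intro hc
          have hcn : ∀ i ≤ n, x i + y i = x 0 + y 0 := fun i hi => hc i (le_trans hi (Nat.le_succ n))
          have hval : (g n : ∀ _ : GWDelta, ℂ) x = f x := (ih x).1 hcn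
          have hP : x n + x (n + 1) = y n + y (n + 1) :=
            zmod2_trans (hc n (Nat.le_succ n)) (hc (n + 1) le_rfl)
          have hsgn := sgn4_eq (p := y n) (q := y (n + 1)) (r := x n) (s := x (n + 1)) hP.symm
          rw [hcoe, hval]
          rw [pow_add (-1 : ℂ) ((x n).val) ((x (n+1)).val)] at hsgn
          linear_combination (2⁻¹ : ℂ) * (f : ∀ _ : GWDelta, ℂ) x * hsgn
        · intro hc
          by_cases hcn : ∀ i ≤ n, x i + y i = x 0 + y 0
          · have hlast : ¬ (x (n + 1) + y (n + 1) = x 0 + y 0) := by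
              intro hl
              apply hc
              intro i hi
              rcases Nat.lt_or_ge i (n + 1) with h' | h'
              · exact hcn i (by omega)
              · have hi1 : i = n + 1 := by omega
                subst hi1
                exact hl
            have hP' : ¬ (x n + x (n + 1) = y n + y (n + 1)) := by
              intro hp
              exact hlast (zmod2_trans' (hcn n le_rfl) hp)
            have hsgn := sgn4_ne (p := y n) (q := y (n + 1)) (r := x n) (s := x (n + 1))
              (fun hh => hP' hh.symm)
            have hval : (g n : ∀ _ : GWDelta, ℂ) x = f x := (ih x).1 hcn
            rw [hcoe, hval]
            rw [pow_add (-1 : ℂ) ((x n).val) ((x (n+1)).val)] at hsgn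
            linear_combination (2⁻¹ : ℂ) * (f : ∀ _ : GWDelta, ℂ) x * hsgn
          · have hval : (g n : ∀ _ : GWDelta, ℂ) x = 0 := (ih x).2 hcn
            rw [hcoe, hval]
            ring
    -- the target element
  set c : ℂ := (f : ∀ _ : GWDelta, ℂ) y with hcdef
  set φ : FockH := c • e y with hφ
  have hφ_apply : ∀ x, (φ : ∀ _ : GWDelta, ℂ) x = if x = y then c else 0 := by
    intro x
    rw [hφ, lp.coeFn_smul, Pi.smul_apply, he_apply, smul_eq_mul]
    by_cases h : x = y <;> simp [h]
  have hcondy : ∀ n : ℕ, ∀ i ≤ n, y i + y i = y 0 + y 0 := by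
    intro n i _
    simp [CharTwo.add_self_eq_zero]
  have hbound : ∀ n x, ‖((g n - φ : FockH) : ∀ _ : GWDelta, ℂ) x‖
      ≤ ‖(f : ∀ _ : GWDelta, ℂ) x‖ := by
    intro n x
    rw [lp.coeFn_sub, Pi.sub_apply, hφ_apply]
    rcases eq_or_ne x y with rfl | hxy
    · rw [if_pos rfl, (key n x).1 (hcondy n)]
      simp [hcdef]
    · rw [if_neg hxy, sub_zero]
      by_cases hcn : ∀ i ≤ n, x i + y i = x 0 + y 0
      · rw [(key n x).1 hcn]
      · rw [(key n x).2 hcn]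
        simp
  have hvan : ∀ x : GWDelta, ∃ N, ∀ n ≥ N,
      ((g n - φ : FockH) : ∀ _ : GWDelta, ℂ) x = 0 := by
    intro x
    rcases eq_or_ne x y with rfl | hxy
    · refine ⟨0, fun n _ => ?_⟩
      rw [lp.coeFn_sub, Pi.sub_apply, hφ_apply, if_pos rfl, (key n x).1 (hcondy n), sub_self]
    · obtain ⟨N, hN⟩ := escape x y hxy
      refine ⟨N, fun n hn => ?_⟩
      rw [lp.coeFn_sub, Pi.sub_apply, hφ_apply, if_neg hxy, sub_zero, (key n x).2 (hN n hn)]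
  have hFs : Summable fun x => ‖(f : ∀ _ : GWDelta, ℂ) x‖ ^ (2:ℝ) :=
    (lp.memℓp f).summable (by norm_num)
  have hsq0 : Filter.Tendsto
      (fun n => ∑' x, ‖((g n - φ : FockH) : ∀ _ : GWDelta, ℂ) x‖ ^ (2:ℝ))
      Filter.atTop (nhds 0) := by
    rw [Metric.tendsto_atTop]
    intro ε hε
    obtain ⟨s, hs⟩ := Metric.tendsto_atTop.1
      (tendsto_tsum_compl_atTop_zero (fun x => ‖(f : ∀ _ : GWDelta, ℂ) x‖ ^ (2:ℝ))) ε hε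
    have hstail := hs s le_rfl
    rw [Real.dist_eq, sub_zero,
      _root_.abs_of_nonneg (tsum_nonneg fun x => Real.rpow_nonneg (norm_nonneg _) _)] at hstail
    choose Nf hNf using hvan
    refine ⟨s.sup Nf, fun n hn => ?_⟩
    have hnn : (0:ℝ) ≤ ∑' x, ‖((g n - φ : FockH) : ∀ _ : GWDelta, ℂ) x‖ ^ (2:ℝ) :=
      tsum_nonneg fun x => Real.rpow_nonneg (norm_nonneg _) _
    rw [Real.dist_eq, sub_zero, _root_.abs_of_nonneg hnn]
    have hsupp : Function.support
        (fun x => ‖((g n - φ : FockH) : ∀ _ : GWDelta, ℂ) x‖ ^ (2:ℝ)) ⊆ {x | x ∉ s} := by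
      intro x hx hxs
      apply hx
      have h0 := hNf x n (le_trans (Finset.le_sup hxs) hn)
      simp only [h0, norm_zero]
      exact Real.zero_rpow (by norm_num)
    have heq : ∑' (x : {x : GWDelta // x ∉ s}),
          ‖((g n - φ : FockH) : ∀ _ : GWDelta, ℂ) (x : GWDelta)‖ ^ (2:ℝ)
        = ∑' x, ‖((g n - φ : FockH) : ∀ _ : GWDelta, ℂ) x‖ ^ (2:ℝ) :=
      tsum_subtype_eq_of_support_subset hsupp
    rw [← heq]
    have hle : ∑' (x : {x : GWDelta // x ∉ s}),
          ‖((g n - φ : FockH) : ∀ _ : GWDelta, ℂ) (x : GWDelta)‖ ^ (2:ℝ)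
        ≤ ∑' (x : {x : GWDelta // x ∉ s}), ‖(f : ∀ _ : GWDelta, ℂ) (x : GWDelta)‖ ^ (2:ℝ) := by
      refine Summable.tsum_le_tsum
        (fun x => Real.rpow_le_rpow (norm_nonneg _) (hbound n x) (by norm_num)) ?_ ?_
      · exact (((lp.memℓp (g n - φ)).summable (by norm_num)).subtype _)
      · exact hFs.subtype _
    exact lt_of_le_of_lt hle hstail
  have htend : Filter.Tendsto g Filter.atTop (nhds φ) := by
    rw [tendsto_iff_norm_sub_tendsto_zero]
    have hrw : ∀ n, ‖g n - φ‖
        = (∑' x, ‖((g n - φ : FockH) : ∀ _ : GWDelta, ℂ) x‖ ^ (2:ℝ)) ^ ((2:ℝ)⁻¹) := by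
      intro n
      rw [lp.norm_eq_tsum_rpow (by norm_num) (g n - φ)]
      norm_num
    simp only [hrw]
    have hcont : Filter.Tendsto (fun t : ℝ => t ^ ((2:ℝ)⁻¹)) (nhds 0) (nhds 0) := by
      have h0 : (0:ℝ) ^ ((2:ℝ)⁻¹) = 0 := Real.zero_rpow (by norm_num)
      have := (Real.continuousAt_rpow_const 0 ((2:ℝ)⁻¹) (Or.inr (by norm_num))).tendsto
      rwa [h0] at this
    exact hcont.comp hsq0
  have hφU : φ ∈ U := hUc.mem_of_tendsto htend (Filter.Eventually.of_forall fun n => hgU n)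
  -- the full complex line through e y lies in U
  have hsgn_sq : ∀ m : ℕ, ((-1:ℝ) ^ m) * ((-1:ℝ) ^ m) = 1 := fun m => by
    rw [← pow_add]
    exact Even.neg_one_pow ⟨m, by ring⟩
  have hRs : ∀ (r : ℝ) (v : FockH) (x : GWDelta),
      ((r • v : FockH) : ∀ _ : GWDelta, ℂ) x = (r : ℂ) * (v : ∀ _ : GWDelta, ℂ) x := by
    intro r v x
    rw [lp.coeFn_smul, Pi.smul_apply, Complex.real_smul]
  have hCs : ∀ (a : ℂ) (v : FockH) (x : GWDelta),
      ((a • v : FockH) : ∀ _ : GWDelta, ℂ) x = a * (v : ∀ _ : GWDelta, ℂ) x := by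
    intro a v x
    rw [lp.coeFn_smul, Pi.smul_apply, smul_eq_mul]
  have hIφ : (Complex.I • φ : FockH) ∈ U := by
    have h1 : J' 0 (J 0 φ) ∈ U := hTU 0 φ hφU
    have h2 : J' 0 (J 0 φ) = ((-1:ℝ) ^ ((y 0).val + 1)) • (Complex.I • φ : FockH) := by
      apply lp.ext; funext x
      rw [hTform 0 φ x, hRs ((-1:ℝ) ^ ((y 0).val + 1)) (Complex.I • φ) x, hCs Complex.I φ x,
        hφ_apply x]
      by_cases hxy : x = y
      · rw [if_pos hxy, hxy]
        push_cast
        ring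
      · rw [if_neg hxy]
        ring
    have h3 := U.smul_mem ((-1:ℝ) ^ ((y 0).val + 1)) h1
    rw [h2, smul_smul, hsgn_sq, one_smul] at h3
    exact h3
  have hc0 : c ≠ 0 := hy
  have hCe : ∀ u : ℂ, (u • e y : FockH) ∈ U := by
    intro u
    have hmem : (((u * c⁻¹).re) • φ + ((u * c⁻¹).im) • (Complex.I • φ) : FockH) ∈ U :=
      U.add_mem (U.smul_mem _ hφU) (U.smul_mem _ hIφ)
    have heq2 : (((u * c⁻¹).re) • φ + ((u * c⁻¹).im) • (Complex.I • φ) : FockH)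
        = u • e y := by
      apply lp.ext; funext x
      rw [lp.coeFn_add, Pi.add_apply, hRs ((u * c⁻¹).re) φ x,
        hRs ((u * c⁻¹).im) (Complex.I • φ) x, hCs Complex.I φ x, hCs u (e y) x,
        hφ_apply x, he_apply y x]
      by_cases hxy : x = y
      · simp only [if_pos hxy]
        have hre := Complex.re_add_im (u * c⁻¹)
        have hc1 : (u * c⁻¹) * c = u := by field_simp
        linear_combination c * hre + hc1
      · simp only [if_neg hxy]
        ring
    exact heq2 ▸ hmem
  -- translation step
  have hstep : ∀ z : GWDelta, (∀ u : ℂ, (u • e z : FockH) ∈ U) → ∀ k : ℕ, ∀ u : ℂ,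
      (u • e (z + Finsupp.single k 1) : FockH) ∈ U := by
    intro z hz k u
    set w : GWDelta := z + Finsupp.single k 1 with hw
    have hxw : ∀ x : GWDelta, x + Finsupp.single k 1 = z ↔ x = w := by
      intro x
      constructor
      · intro h
        rw [hw, ← h, gw_add_single_single]
      · intro h
        rw [h, hw, gw_add_single_single]
    have hkey : J' k (u • e z)
        = ((-1:ℝ) ^ ((w k).val + ∑ i ∈ Finset.range k, (w i).val)) • (u • e w : FockH) := by
      apply lp.ext; funext x
      rw [hJ'f k _ x, hCs u (e z) (x + Finsupp.single k 1),
        hRs ((-1:ℝ) ^ ((w k).val + ∑ i ∈ Finset.range k, (w i).val)) (u • e w) x,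
        hCs u (e w) x, he_apply z _, he_apply w x]
      by_cases hxw' : x = w
      · rw [if_pos ((hxw x).2 hxw'), if_pos hxw', hxw']
        push_cast
        ring
      · rw [if_neg (fun h => hxw' ((hxw x).1 h)), if_neg hxw']
        ring
    have h1 := U.smul_mem ((-1:ℝ) ^ ((w k).val + ∑ i ∈ Finset.range k, (w i).val))
      ((hinv k _ (hz u)).2)
    rw [hkey, smul_smul, hsgn_sq, one_smul] at h1
    exact h1
  have hz_all : ∀ z : GWDelta, ∀ u : ℂ, (u • e z : FockH) ∈ U := by
    have hall : ∀ d : GWDelta, ∀ u : ℂ, (u • e (y + d) : FockH) ∈ U := by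
      intro d
      induction d using Finsupp.induction with
      | zero => simpa using hCe
      | single_add k b d hk hb ih =>
          rcases zmod2_cases b with hb0 | hb1
          · exact absurd hb0 hb
          · subst hb1
            have hre : y + (Finsupp.single k 1 + d) = (y + d) + Finsupp.single k 1 := by
              abel
            rw [hre]
            exact hstep (y + d) ih k
    intro z u
    have h := hall (y + z) u
    rwa [show y + (y + z) = z from by rw [← add_assoc, gw_add_self, zero_add]] at h
  -- density of singles
  rw [Submodule.eq_top_iff']
  intro v
  have hsum := lp.hasSum_single (E := fun _ : GWDelta => ℂ) (p := 2)
    (by simp : (2:ℝ≥0∞) ≠ ⊤) v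
  have hmem : ∀ s : Finset GWDelta,
      (∑ x ∈ s, lp.single 2 x ((v : ∀ _ : GWDelta, ℂ) x)) ∈ U := by
    intro s
    refine Submodule.sum_mem U fun x _ => ?_
    have hx : lp.single 2 x ((v : ∀ _ : GWDelta, ℂ) x)
        = (((v : ∀ _ : GWDelta, ℂ) x) • e x : FockH) := by
      rw [he, ← lp.single_smul, smul_eq_mul, mul_one]
    rw [hx]
    exact hz_all x _
  exact hUc.mem_of_tendsto hsum (Filter.Eventually.of_forall hmem)
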